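/- For every a ∈ A_reg, the Casimir element Ω admits the Cartan factorisation Ω = Σⱼ xⱼ² + ½ Σ_{α∈R} ((a^α + a^{−α})/(a^α − a^{−α})) t_α + Σ_{α∈R} ( Ad_{a⁻¹}(y_α²) − (a^α + a^{−α}) Ad_{a⁻¹}(y_α) y_α + y_α² ) / (a^α − a^{−α})², where y_α = e_α − e₋α. -/

import Mathlib

set_option maxHeartbeats 1000000 in
lemma aux_root_stmt4 {U : Type*} [Ring U] [Algebra ℂ U] (A B : U) (q u : ℂ)
    (hu : q * u = 1) (hreg : q - u ≠ 0) :
    ((q + u)/(2*(q - u))) • (A*B - B*A)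
      + ((q - u)^2)⁻¹ • ((u • A - q • B)^2
          - (q + u) • ((u • A - q • B) * (A - B)) + (A - B)^2)
    = A*B - (2:ℂ)⁻¹ • (A*B - B*A) := by
  have step1 : (u • A - q • B)^2 - (q + u) • ((u • A - q • B) * (A - B)) + (A - B)^2
      = (u*u - 1) • (A*B) + (q*q - 1) • (B*A) := by
    simp only [pow_two, sub_mul, mul_sub, smul_mul_assoc, mul_smul_comm, smul_smul,
      smul_sub, smul_add]
    match_scalars <;> first | ring1 | linear_combination -hu
  rw [step1]
  match_scalars <;> field_simp <;> linear_combination 2 * hu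

/-- Cartan factorisation of the Casimir: for `a ∈ A_reg`,
`Ω = Σⱼ xⱼ² + ½ Σ_{α∈R} ((a^α+a^{−α})/(a^α−a^{−α})) t_α
   + Σ_{α∈R} (Ad_{a⁻¹}(y_α²) − (a^α+a^{−α}) Ad_{a⁻¹}(y_α) y_α + y_α²)/(a^α−a^{−α})²`,
with `y_α = e_α − e_{−α}`.  Roots are encoded via `ι'` with fixed-point-free involution
`nve` (`α ↦ −α`), `⁅e i, e (nve i)⁆ = t i`, `t (nve i) = −t i`; `p i = a^{α_i}` with
`p (nve i) = (p i)⁻¹`, `p i ≠ 0`, and regularity `p i − (p i)⁻¹ ≠ 0`.  `Ad_{a⁻¹}` is the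
algebra automorphism `Φ` of `U(g)` with `Φ(e_α) = a^{−α} e_α` and fixing the Cartan part. -/
theorem stmt_4 (L : Type*) [LieRing L] [LieAlgebra ℂ L]
    [Module.Free ℂ L] [Module.Finite ℂ L]
    (rk : ℕ) (x : Fin rk → L)
    (hortho : ∀ j k, (killingForm ℂ L) (x j) (x k) = if j = k then 1 else 0)
    (ι' : Type*) [Fintype ι'] [DecidableEq ι']
    (nve : ι' ≃ ι') (hinv : ∀ i, nve (nve i) = i) (hfix : ∀ i, nve i ≠ i)
    (e t : ι' → L)
    (ht : ∀ i, t (nve i) = - t i)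
    (hbr : ∀ i, ⁅e i, e (nve i)⁆ = t i)
    (p : ι' → ℂ)
    (hp0 : ∀ i, p i ≠ 0) (hpreg : ∀ i, p i - (p i)⁻¹ ≠ 0)
    (hpn : ∀ i, p (nve i) = (p i)⁻¹)
    (Φ : UniversalEnvelopingAlgebra ℂ L →ₐ[ℂ] UniversalEnvelopingAlgebra ℂ L)
    (hΦe : ∀ i, Φ (UniversalEnvelopingAlgebra.ι ℂ (e i))
        = (p i)⁻¹ • UniversalEnvelopingAlgebra.ι ℂ (e i))
    (hΦx : ∀ j, Φ (UniversalEnvelopingAlgebra.ι ℂ (x j))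
        = UniversalEnvelopingAlgebra.ι ℂ (x j))
    (hΦt : ∀ i, Φ (UniversalEnvelopingAlgebra.ι ℂ (t i))
        = UniversalEnvelopingAlgebra.ι ℂ (t i)) :
    (∑ j, (UniversalEnvelopingAlgebra.ι ℂ (x j) : UniversalEnvelopingAlgebra ℂ L)^2)
        + ∑ i, (UniversalEnvelopingAlgebra.ι ℂ (e i))
            * (UniversalEnvelopingAlgebra.ι ℂ (e (nve i)))
      = (∑ j, (UniversalEnvelopingAlgebra.ι ℂ (x j))^2)
        + ∑ i, ((p i + (p i)⁻¹)/(2 * (p i - (p i)⁻¹)))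
            • (UniversalEnvelopingAlgebra.ι ℂ (t i))
        + ∑ i, ((p i - (p i)⁻¹)^2)⁻¹
            • (Φ ((UniversalEnvelopingAlgebra.ι ℂ (e i - e (nve i)))^2)
               - (p i + (p i)⁻¹) • (Φ (UniversalEnvelopingAlgebra.ι ℂ (e i - e (nve i)))
                    * UniversalEnvelopingAlgebra.ι ℂ (e i - e (nve i)))
               + (UniversalEnvelopingAlgebra.ι ℂ (e i - e (nve i)))^2) := by
  set ι := UniversalEnvelopingAlgebra.ι ℂ (L := L) with hι
  -- per-root identity
  have key : ∀ i, ((p i + (p i)⁻¹)/(2 * (p i - (p i)⁻¹))) • (ι (t i))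
        + ((p i - (p i)⁻¹)^2)⁻¹
            • (Φ ((ι (e i - e (nve i)))^2)
               - (p i + (p i)⁻¹) • (Φ (ι (e i - e (nve i))) * ι (e i - e (nve i)))
               + (ι (e i - e (nve i)))^2)
      = ι (e i) * ι (e (nve i)) - (2:ℂ)⁻¹ • (ι (e i) * ι (e (nve i)) - ι (e (nve i)) * ι (e i)) := by
    intro i
    have hT : (ι (t i)) = ι (e i) * ι (e (nve i)) - ι (e (nve i)) * ι (e i) := by
      letI : LieRing (UniversalEnvelopingAlgebra ℂ L) := LieRing.ofAssociativeRing
      rw [← hbr i, LieHom.map_lie, Ring.lie_def]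
    have hsub : ι (e i - e (nve i)) = ι (e i) - ι (e (nve i)) := map_sub _ _ _
    have hΦy : Φ (ι (e i - e (nve i))) = (p i)⁻¹ • ι (e i) - (p i) • ι (e (nve i)) := by
      rw [hsub, map_sub, hΦe, hΦe, hpn, inv_inv]
    rw [map_pow, hΦy, hsub, hT]
    exact aux_root_stmt4 (ι (e i)) (ι (e (nve i))) (p i) (p i)⁻¹
      (mul_inv_cancel₀ (hp0 i)) (hpreg i)
  -- the sum of the t i vanishes
  have hTsum : ∑ i, (ι (t i)) = 0 := by
    have h1 : ∑ i, (ι (t i)) = ∑ i, (ι (t (nve i))) :=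
      (Equiv.sum_comp nve (fun i => ι (t i))).symm
    have h2 : ∑ i, (ι (t (nve i))) = - ∑ i, (ι (t i)) := by
      simp [ht, Finset.sum_neg_distrib]
    have h3 : (2:ℂ) • ∑ i, (ι (t i)) = 0 := by
      rw [two_smul]
      nth_rewrite 1 [h1, h2]
      simp
    calc ∑ i, (ι (t i)) = (2:ℂ)⁻¹ • ((2:ℂ) • ∑ i, (ι (t i))) := by
          rw [smul_smul]; norm_num
      _ = 0 := by rw [h3, smul_zero]
  rw [add_assoc]
  congr 1
  symm
  calc
    (∑ i, ((p i + (p i)⁻¹)/(2 * (p i - (p i)⁻¹))) • (ι (t i)))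
        + ∑ i, ((p i - (p i)⁻¹)^2)⁻¹
            • (Φ ((ι (e i - e (nve i)))^2)
               - (p i + (p i)⁻¹) • (Φ (ι (e i - e (nve i))) * ι (e i - e (nve i)))
               + (ι (e i - e (nve i)))^2)
      = ∑ i, (((p i + (p i)⁻¹)/(2 * (p i - (p i)⁻¹))) • (ι (t i))
          + ((p i - (p i)⁻¹)^2)⁻¹
            • (Φ ((ι (e i - e (nve i)))^2)
               - (p i + (p i)⁻¹) • (Φ (ι (e i - e (nve i))) * ι (e i - e (nve i)))
               + (ι (e i - e (nve i)))^2)) := Finset.sum_add_distrib.symm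
    _ = ∑ i, (ι (e i) * ι (e (nve i))
          - (2:ℂ)⁻¹ • (ι (e i) * ι (e (nve i)) - ι (e (nve i)) * ι (e i))) :=
        Finset.sum_congr rfl (fun i _ => key i)
    _ = ∑ i, ι (e i) * ι (e (nve i))
          - (2:ℂ)⁻¹ • ∑ i, (ι (e i) * ι (e (nve i)) - ι (e (nve i)) * ι (e i)) := by
        rw [Finset.sum_sub_distrib, Finset.smul_sum]
    _ = ∑ i, ι (e i) * ι (e (nve i)) := by
        have : ∑ i, (ι (e i) * ι (e (nve i)) - ι (e (nve i)) * ι (e i)) = 0 := by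
          calc ∑ i, (ι (e i) * ι (e (nve i)) - ι (e (nve i)) * ι (e i))
              = ∑ i, (ι (t i)) := Finset.sum_congr rfl (fun i _ => by
                letI : LieRing (UniversalEnvelopingAlgebra ℂ L) := LieRing.ofAssociativeRing
                rw [← hbr i, LieHom.map_lie, Ring.lie_def])
            _ = 0 := hTsum
        rw [this, smul_zero, sub_zero]
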